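/- Let p, q be positive natural numbers and λ > 0, μ > 0, α > 0 with α ≥ μ, and let Ω ≥ 0 be a real number. Let E : ℝ → ℝ be a function with E(t) ≥ 0 for all t ≥ 0, having derivative E'(t) at every t ≥ 0, and let z, z⋆ : ℝ → ℝ^q and w, w⋆ : ℝ → ℝ^p be functions with ‖w(t) − w⋆(t)‖ ≤ Ω for all t ≥ 0. Suppose for all t ≥ 0: (i) E'(t) ≤ −λ·E(t) + μ·‖w(t) − w⋆(t)‖², and (ii) ‖z(t) − z⋆(t)‖² ≤ α·(λ·E(t) + (α−μ)·‖w(t) − w⋆(t)‖²). Then for all t ≥ 0, ‖z(t) − z⋆(t)‖² ≤ α²·Ω² + α·λ·E(0)·exp(−λ·t). -/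

import Mathlib

/-- Analytic core of Theorem 1: combining the energy decrease inequality (18)
with the pointwise output bound (22) yields the universal L∞-gain bound. -/
theorem stmt6 (p q : ℕ) (hp : 0 < p) (hq : 0 < q)
    (lam mu alp Ω : ℝ) (hlam : 0 < lam) (hmu : 0 < mu) (halp : 0 < alp)
    (hma : mu ≤ alp) (hΩ : 0 ≤ Ω)
    (E E' : ℝ → ℝ)
    (hEnn : ∀ t : ℝ, 0 ≤ t → 0 ≤ E t)
    (hE : ∀ t : ℝ, 0 ≤ t → HasDerivAt E (E' t) t)
    (z zs : ℝ → EuclideanSpace ℝ (Fin q)) (w ws : ℝ → EuclideanSpace ℝ (Fin p))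
    (hw : ∀ t : ℝ, 0 ≤ t → ‖w t - ws t‖ ≤ Ω)
    (h1 : ∀ t : ℝ, 0 ≤ t → E' t ≤ -lam * E t + mu * ‖w t - ws t‖ ^ 2)
    (h2 : ∀ t : ℝ, 0 ≤ t →
      ‖z t - zs t‖ ^ 2 ≤ alp * (lam * E t + (alp - mu) * ‖w t - ws t‖ ^ 2)) :
    ∀ t : ℝ, 0 ≤ t →
      ‖z t - zs t‖ ^ 2 ≤ alp ^ 2 * Ω ^ 2 + alp * lam * E 0 * Real.exp (-lam * t) := by
  intro t ht
  set c : ℝ := mu * Ω ^ 2 / lam with hc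
  have hcnn : 0 ≤ c := by positivity
  have hlc : lam * c = mu * Ω ^ 2 := by rw [hc]; field_simp [hlam.ne']
  set g : ℝ → ℝ := fun s => (E s - c) * Real.exp (lam * s) with hgdef
  have hg : ∀ s ∈ Set.Ici (0:ℝ), HasDerivAt g
      ((E' s + lam * (E s - c)) * Real.exp (lam * s)) s := by
    intro s hs
    have hexp : HasDerivAt (fun s : ℝ => Real.exp (lam * s)) (Real.exp (lam * s) * (lam * 1)) s :=
      ((hasDerivAt_id s).const_mul lam).exp
    have := ((hE s hs).sub_const c).fun_mul hexp
    rw [hgdef]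
    exact this.congr_deriv (by ring)
  have hcont : ContinuousOn g (Set.Ici 0) := fun s hs =>
    ((hg s hs).differentiableAt.continuousAt).continuousWithinAt
  have hanti : AntitoneOn g (Set.Ici 0) := by
    apply antitoneOn_of_deriv_nonpos (convex_Ici 0) hcont
    · intro x hx
      rw [interior_Ici] at hx
      exact (hg x (Set.mem_Ici.mpr (le_of_lt hx))).differentiableAt.differentiableWithinAt
    intro x hx
    rw [interior_Ici] at hx
    have hx0 : (0:ℝ) ≤ x := le_of_lt hx
    rw [(hg x hx0).deriv]
    have hwx : ‖w x - ws x‖ ^ 2 ≤ Ω ^ 2 := by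
      have := hw x hx0
      nlinarith [norm_nonneg (w x - ws x)]
    have : E' x + lam * (E x - c) ≤ 0 := by
      have := h1 x hx0
      nlinarith
    exact mul_nonpos_of_nonpos_of_nonneg this (Real.exp_nonneg _)
  have hkey : g t ≤ g 0 := hanti (Set.self_mem_Ici) ht ht
  have hg0 : g 0 = E 0 - c := by simp [hgdef]
  -- turn into bound on lam * E t
  have hexpos : 0 < Real.exp (lam * t) := Real.exp_pos _
  have hinv : Real.exp (-lam * t) = (Real.exp (lam * t))⁻¹ := by
    rw [← Real.exp_neg]; ring_nf
  have hEt : lam * E t ≤ lam * E 0 * Real.exp (-lam * t) + mu * Ω ^ 2 := by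
    have h' : (E t - c) * Real.exp (lam * t) ≤ E 0 - c := by rw [← hg0]; exact hkey
    have hle1 : Real.exp (-lam * t) ≤ 1 := by
      rw [Real.exp_le_one_iff]
      nlinarith
    have h'' : E t - c ≤ (E 0 - c) * Real.exp (-lam * t) := by
      rw [hinv, ← div_eq_mul_inv]
      exact (le_div_iff₀ hexpos).mpr h'
    nlinarith [mul_le_mul_of_nonneg_left h'' hlam.le,
      mul_nonneg (mul_nonneg hlam.le hcnn) (Real.exp_nonneg (-lam * t))]
  have hwt : ‖w t - ws t‖ ^ 2 ≤ Ω ^ 2 := by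
    have := hw t ht
    nlinarith [norm_nonneg (w t - ws t)]
  have := h2 t ht
  nlinarith [mul_le_mul_of_nonneg_left hEt halp.le,
    mul_le_mul_of_nonneg_left hwt (mul_nonneg halp.le (sub_nonneg.mpr hma))]
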